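/- Let f : E → [0,∞] be upper semicontinuous and concave. Then for every y ∈ E the map v ↦ f^p(y,v) is nondecreasing on ℝ₊₊ if and only if 0 ∈ closure{x ∈ E : f(x) > 0} or f is identically 0. -/

import Mathlib

open Set
open scoped ENNReal RealInnerProductSpace

noncomputable section

variable {E : Type*} [NormedAddCommGroup E] [InnerProductSpace ℝ E] [FiniteDimensional ℝ E]

/-- The perspective function `f^p(y,v) = v·f(y/v)` (for `v > 0`). -/
def persp (f : E → ℝ≥0∞) (y : E) (v : ℝ) : ℝ≥0∞ := ENNReal.ofReal v * f (v⁻¹ • y)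

/-- The hypograph `hypo f = {(x,u) ∈ E × ℝ₊₊ : f(x) ≥ u}`. -/
def hypoSet (f : E → ℝ≥0∞) : Set (E × ℝ) :=
  {p : E × ℝ | 0 < p.2 ∧ ENNReal.ofReal p.2 ≤ f p.1}

lemma aux_real (f : E → ℝ≥0∞)
    (husc : ∀ p ∈ closure (hypoSet f), 0 < p.2 → p ∈ hypoSet f)
    (hconc : Convex ℝ (hypoSet f))
    (h0 : (0 : E) ∈ closure {x : E | 0 < f x})
    {x : E} {t : ℝ} (ht : 0 < t) (ht1 : t ≤ 1)
    {u : ℝ} (hu : 0 < u) (hux : ENNReal.ofReal u ≤ f x) :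
    ENNReal.ofReal (t * u) ≤ f (t • x) := by
  obtain ⟨z, hzmem, hztend⟩ := mem_closure_iff_seq_limit.1 h0
  have hc : ∀ n : ℕ, ∃ c : ℝ, 0 < c ∧ c ≤ 1 / (n + 1) ∧ ENNReal.ofReal c ≤ f (z n) := by
    intro n
    have hzpos : 0 < f (z n) := hzmem n
    rcases eq_or_ne (f (z n)) ⊤ with htop | htop
    · exact ⟨1 / (n + 1), by positivity, le_refl _, by simp [htop]⟩
    · refine ⟨min ((f (z n)).toReal) (1 / (n + 1)), ?_, min_le_right _ _, ?_⟩
      · exact lt_min (ENNReal.toReal_pos hzpos.ne' htop) (by positivity)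
      · calc ENNReal.ofReal _ ≤ ENNReal.ofReal ((f (z n)).toReal) :=
              ENNReal.ofReal_le_ofReal (min_le_left _ _)
          _ = f (z n) := ENNReal.ofReal_toReal htop
  choose c hc1 hc2 hc3 using hc
  -- the sequence of convex combinations
  set p : ℕ → E × ℝ := fun n => (t • x + (1 - t) • z n, t * u + (1 - t) * c n) with hp
  have hmem : ∀ n, p n ∈ hypoSet f := by
    intro n
    have := hconc (x := (x, u)) (y := (z n, c n)) ⟨hu, hux⟩ ⟨hc1 n, hc3 n⟩
      ht.le (by linarith : (0:ℝ) ≤ 1 - t) (by ring)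
    simpa [hp, Prod.smul_def, Prod.ext_iff, smul_eq_mul] using this
  have htend : Filter.Tendsto p Filter.atTop (nhds (t • x, t * u)) := by
    rw [Prod.tendsto_iff]
    constructor
    · have : Filter.Tendsto (fun n => t • x + (1 - t) • z n) Filter.atTop
          (nhds (t • x + (1 - t) • (0 : E))) :=
        Filter.Tendsto.add tendsto_const_nhds (hztend.const_smul _)
      simpa using this
    · have hczero : Filter.Tendsto c Filter.atTop (nhds 0) := by
        refine squeeze_zero (fun n => (hc1 n).le) hc2 ?_
        exact tendsto_one_div_add_atTop_nhds_zero_nat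
      have : Filter.Tendsto (fun n => t * u + (1 - t) * c n) Filter.atTop
          (nhds (t * u + (1 - t) * 0)) :=
        Filter.Tendsto.add tendsto_const_nhds (hczero.const_mul _)
      simpa using this
  have hclos : (t • x, t * u) ∈ closure (hypoSet f) :=
    mem_closure_of_tendsto htend (Filter.Eventually.of_forall hmem)
  exact (husc _ hclos (by positivity)).2

lemma key_lemma (f : E → ℝ≥0∞)
    (husc : ∀ p ∈ closure (hypoSet f), 0 < p.2 → p ∈ hypoSet f)
    (hconc : Convex ℝ (hypoSet f))
    (h0 : (0 : E) ∈ closure {x : E | 0 < f x})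
    {x : E} {t : ℝ} (ht : 0 < t) (ht1 : t ≤ 1) :
    ENNReal.ofReal t * f x ≤ f (t • x) := by
  refine ENNReal.le_of_forall_nnreal_lt (fun r hr => ?_)
  rcases eq_or_ne r 0 with rfl | hr0
  · simp
  have htne : ENNReal.ofReal t ≠ 0 := by simp [ENNReal.ofReal_eq_zero]; linarith
  have httop : ENNReal.ofReal t ≠ ⊤ := ENNReal.ofReal_ne_top
  set s : ℝ≥0∞ := (r : ℝ≥0∞) / ENNReal.ofReal t with hs
  have hslt : s < f x := by
    rw [hs, ENNReal.div_lt_iff (Or.inl htne) (Or.inl httop)]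
    rwa [mul_comm]
  have hsne : s ≠ 0 := by
    simp only [hs, ne_eq, ENNReal.div_eq_zero_iff]
    push_neg
    exact ⟨by exact_mod_cast hr0, httop⟩
  have hstop : s ≠ ⊤ := by
    simp only [hs]
    exact (ENNReal.div_lt_top (by simp) htne).ne
  have hupos : 0 < s.toReal := ENNReal.toReal_pos hsne hstop
  have hofs : ENNReal.ofReal s.toReal = s := ENNReal.ofReal_toReal hstop
  have hux : ENNReal.ofReal s.toReal ≤ f x := by rw [hofs]; exact hslt.le
  have := aux_real f husc hconc h0 ht ht1 hupos hux
  have heq : ENNReal.ofReal (t * s.toReal) = (r : ℝ≥0∞) := by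
    rw [ENNReal.ofReal_mul ht.le, hofs, hs, ENNReal.mul_div_cancel htne httop]
  rwa [heq] at this

/-- For an upper semicontinuous concave `f`, every `f^p(y,·)` is nondecreasing on `ℝ₊₊`
iff `0 ∈ closure{x : f(x) > 0}` or `f` is identically `0`. -/
theorem concave_nondecreasing_characterization (f : E → ℝ≥0∞)
    (husc : ∀ p ∈ closure (hypoSet f), 0 < p.2 → p ∈ hypoSet f)
    (hconc : Convex ℝ (hypoSet f)) :
    (∀ y : E, MonotoneOn (persp f y) (Ioi (0 : ℝ))) ↔
      ((0 : E) ∈ closure {x : E | 0 < f x} ∨ f = fun _ => 0) := by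
  constructor
  · intro H
    by_cases hf : f = fun _ => 0
    · exact Or.inr hf
    · left
      obtain ⟨x, hx⟩ : ∃ x, f x ≠ 0 := by
        by_contra h
        push_neg at h
        exact hf (funext fun x => h x)
      have hmemseq : ∀ n : ℕ, ((n + 1 : ℝ))⁻¹ • x ∈ {x : E | 0 < f x} := by
        intro n
        have h1 : (1 : ℝ) ∈ Ioi (0 : ℝ) := by norm_num
        have hn : ((n : ℝ) + 1) ∈ Ioi (0 : ℝ) := mem_Ioi.2 (by positivity)
        have := H x h1 hn (by simp : (1:ℝ) ≤ (n:ℝ) + 1)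
        simp only [persp, inv_one, one_smul, ENNReal.ofReal_one, one_mul] at this
        have hne : f (((n : ℝ) + 1)⁻¹ • x) ≠ 0 := by
          intro h0
          rw [h0, mul_zero] at this
          exact hx (le_zero_iff.1 this)
        exact pos_iff_ne_zero.2 hne
      have htend : Filter.Tendsto (fun n : ℕ => ((n + 1 : ℝ))⁻¹ • x) Filter.atTop
          (nhds (0 : E)) := by
        have : Filter.Tendsto (fun n : ℕ => ((n + 1 : ℝ))⁻¹) Filter.atTop (nhds 0) := by
          simpa [one_div] using tendsto_one_div_add_atTop_nhds_zero_nat (𝕜 := ℝ)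
        simpa using this.smul_const x
      exact mem_closure_of_tendsto htend (Filter.Eventually.of_forall hmemseq)
  · rintro (h0 | hf) y
    · intro v hv w hw hvw
      simp only [mem_Ioi] at hv hw
      have ht : 0 < v / w := by positivity
      have ht1 : v / w ≤ 1 := by
        rw [div_le_one hw]; exact hvw
      have hkey := key_lemma f husc hconc h0 (x := v⁻¹ • y) ht ht1
      have hsm : (v / w) • (v⁻¹ • y) = w⁻¹ • y := by
        rw [smul_smul]
        congr 1
        field_simp
      rw [hsm] at hkey
      calc persp f y v = ENNReal.ofReal v * f (v⁻¹ • y) := rfl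
        _ = ENNReal.ofReal w * (ENNReal.ofReal (v / w) * f (v⁻¹ • y)) := by
            rw [← mul_assoc, ← ENNReal.ofReal_mul hw.le]
            congr 2
            field_simp
        _ ≤ ENNReal.ofReal w * f (w⁻¹ • y) := mul_le_mul_right hkey _
        _ = persp f y w := rfl
    · intro a _ b _ _
      simp [persp, hf]
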